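/- The odd writhe polynomial is additive under connected sum, independently of where the connected sum is performed: f_{K_a # K_b}(t) = f_{K_a}(t) + f_{K_b}(t). At the chord-diagram level: if a chord diagram D is the disjoint ordered concatenation of two chord diagrams D_a and D_b along the circle (no chord of D_a interlinks a chord of D_b), then f_D(t) = f_{D_a}(t) + f_{D_b}(t). -/

import Mathlib

open Finset LaurentPolynomial

/-- A signed, oriented chord diagram (combinatorial Gauss diagram) with `n` chords:
the `2*n` chord endpoints on the circle are the elements of `Fin (2*n)` in (positive)
cyclic order; chord `i` has over endpoint `c⁺ = ep (i, true)`, under endpoint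
`c⁻ = ep (i, false)` and a sign (writhe) `sign i ∈ {1, -1}`. -/
structure ChordDiagram (n : ℕ) where
  ep : Fin n × Bool ≃ Fin (2 * n)
  sign : Fin n → ℤ
  sign_unit : ∀ i, sign i = 1 ∨ sign i = -1

namespace ChordDiagram

variable {n : ℕ}

/-- the over endpoint `c⁺` of a chord -/
def overEnd (D : ChordDiagram n) (i : Fin n) : Fin (2 * n) := D.ep (i, true)

/-- the under endpoint `c⁻` of a chord -/
def under (D : ChordDiagram n) (i : Fin n) : Fin (2 * n) := D.ep (i, false)

/-- the number of steps from `b` to `x`, travelling in the positive direction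
around the circle -/
def relpos (b x : Fin (2 * n)) : ℕ := (x.val + 2 * n - b.val) % (2 * n)

/-- `x` lies strictly between the endpoints of chord `i`, on the side swept out
going from `c⁺` to `c⁻` in the positive direction -/
def StrictlyBetween (D : ChordDiagram n) (i : Fin n) (x : Fin (2 * n)) : Prop :=
  0 < relpos (D.overEnd i) x ∧ relpos (D.overEnd i) x < relpos (D.overEnd i) (D.under i)

instance (D : ChordDiagram n) (i : Fin n) (x : Fin (2 * n)) :
    Decidable (D.StrictlyBetween i x) := inferInstanceAs (Decidable (_ ∧ _))

/-- two distinct chords interlink if their endpoints alternate around the circle,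
i.e. exactly one endpoint of `j` lies strictly between the endpoints of `i` -/
def Interlinks (D : ChordDiagram n) (i j : Fin n) : Prop :=
  i ≠ j ∧ Xor (D.StrictlyBetween i (D.overEnd j)) (D.StrictlyBetween i (D.under j))

instance (D : ChordDiagram n) (i j : Fin n) : Decidable (D.Interlinks i j) :=
  inferInstanceAs (Decidable (_ ∧ _))

/-- the number of chords interlinking chord `i` -/
def interlinkCount (D : ChordDiagram n) (i : Fin n) : ℕ :=
  (univ.filter fun j => D.Interlinks i j).card

/-- the number of chord endpoints lying (strictly) on one side of chord `i` -/
def sideCount (D : ChordDiagram n) (i : Fin n) : ℕ :=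
  (univ.filter fun x => D.StrictlyBetween i x).card

/-- a chord is odd if it interlinks an odd number of other chords -/
def OddChord (D : ChordDiagram n) (i : Fin n) : Prop := Odd (D.interlinkCount i)

instance (D : ChordDiagram n) (i : Fin n) : Decidable (D.OddChord i) :=
  inferInstanceAs (Decidable (Odd _))

/-- The label `N(a)` of the arc whose terminal point is `a`: the sum of the signs of
all chords whose over endpoint is met strictly before their under endpoint when
traversing the circle once in the positive direction starting inside this arc. -/
def arcLabel (D : ChordDiagram n) (a : Fin (2 * n)) : ℤ :=
  ∑ i ∈ univ.filter fun i => relpos a (D.overEnd i) < relpos a (D.under i), D.sign i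

/-- The value `N(c)` of a chord: for a positive chord, the difference `x - y` of the
arc labels just before `c⁺` and just before `c⁻`; for a negative chord, the difference
`z - w` of the arc labels just after `c⁺` and just after `c⁻` (the label just after an
over endpoint is the label just before it minus the sign, and the label just after an
under endpoint is the label just before it plus the sign). -/
def chordVal (D : ChordDiagram n) (i : Fin n) : ℤ :=
  if D.sign i = 1 then D.arcLabel (D.overEnd i) - D.arcLabel (D.under i)
  else (D.arcLabel (D.overEnd i) - D.sign i) - (D.arcLabel (D.under i) + D.sign i)

/-- the odd writhe `J(K) = Σ_{c odd} w(c)` -/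
def oddWrithe (D : ChordDiagram n) : ℤ :=
  ∑ i ∈ univ.filter fun i => D.OddChord i, D.sign i

/-- the odd writhe polynomial `f_K(t) = Σ_{c odd} w(c) · t^{N(c)} ∈ ℤ[t,t⁻¹]` -/
noncomputable def owp (D : ChordDiagram n) : LaurentPolynomial ℤ :=
  ∑ i ∈ univ.filter fun i => D.OddChord i, C (D.sign i) * T (D.chordVal i)

/-- evaluation of the odd writhe polynomial at a rational number `x`:
`Σ_{c odd} w(c) · x^{N(c)}` -/
def owpEval (D : ChordDiagram n) (x : ℚ) : ℚ :=
  ∑ i ∈ univ.filter fun i => D.OddChord i, (D.sign i : ℚ) * x ^ D.chordVal i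

/-- the coefficient of `t^k` in a Laurent polynomial -/
def coeffOf (f : LaurentPolynomial ℤ) (k : ℤ) : ℤ := (AddMonoidAlgebra.coeff f) k

/-- the degree `Deg f = max { |i| : coefficient of tⁱ in f is nonzero }` -/
def owpDeg (f : LaurentPolynomial ℤ) : ℕ := (AddMonoidAlgebra.coeff f).support.sup fun k => k.natAbs

/-- reversing the orientation of the knot: the cyclic order of the endpoints is
reversed, while signs and over/under data of the crossings are preserved -/
def reverse (D : ChordDiagram n) : ChordDiagram n where
  ep := D.ep.trans Fin.revPerm
  sign := D.sign
  sign_unit := D.sign_unit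

/-- the mirror image: every crossing is switched, so every chord's over and under
endpoints are exchanged and its sign is negated -/
def mirror (D : ChordDiagram n) : ChordDiagram n where
  ep := (Equiv.prodCongr (Equiv.refl (Fin n))
      ⟨fun b => !b, fun b => !b, Bool.not_not, Bool.not_not⟩).trans D.ep
  sign := fun i => -D.sign i
  sign_unit := fun i => (D.sign_unit i).elim
    (fun h => Or.inr (show -D.sign i = -1 by rw [h]))
    (fun h => Or.inl (show -D.sign i = 1 by rw [h]; ring))

/-! ### Planarity via the Euler characteristic of the carrier surface

The diagram determines a 4-valent graph (vertices = chords, edges = the `2*n` arcs of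
the circle) together with a rotation system at each vertex, coming from the structure
of a transversal crossing: for a positive crossing the counterclockwise order of the
four ends is (over-out, under-out, over-in, under-in), for a negative crossing it is
(over-out, under-in, over-in, under-out).  The diagram is realizable by a classical
(planar) knot diagram iff the resulting closed oriented carrier surface is a sphere,
i.e. iff `V - E + F = n - 2n + F = 2`.

Darts are encoded as pairs `(p, io) : Fin (2*n) × Bool`, meaning the end of an arc
at the vertex through the circle point `p`, with `io = true` for the outgoing arc
(from `p` to `p+1`) and `io = false` for the incoming arc (from `p-1` to `p`). -/

/-- the other endpoint of the chord through a given endpoint -/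
def otherEnd (D : ChordDiagram n) (p : Fin (2 * n)) : Fin (2 * n) :=
  D.ep ((D.ep.symm p).1, !(D.ep.symm p).2)

lemma otherEnd_otherEnd (D : ChordDiagram n) (p : Fin (2 * n)) :
    D.otherEnd (D.otherEnd p) = p := by
  simp [otherEnd]

/-- whether the rotation at the vertex toggles the in/out marker when passing from
the end at `p` to the end at the other endpoint of its chord -/
def tog (D : ChordDiagram n) (p : Fin (2 * n)) : Bool :=
  if D.sign (D.ep.symm p).1 = 1 then !(D.ep.symm p).2 else (D.ep.symm p).2

/-- the vertex rotation permutation on darts -/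
def vertexPerm (D : ChordDiagram n) : Equiv.Perm (Fin (2 * n) × Bool) :=
  Equiv.trans
    ⟨fun x => (x.1, xor x.2 (D.tog x.1)), fun x => (x.1, xor x.2 (D.tog x.1)),
      fun x => by simp [Bool.xor_assoc], fun x => by simp [Bool.xor_assoc]⟩
    ⟨fun x => (D.otherEnd x.1, x.2), fun x => (D.otherEnd x.1, x.2),
      fun x => by simp [otherEnd_otherEnd], fun x => by simp [otherEnd_otherEnd]⟩

/-- the edge involution on darts, matching the two ends of each arc -/
def arcPerm (D : ChordDiagram n) : Equiv.Perm (Fin (2 * n) × Bool) :=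
  ⟨fun x => if x.2 then (finRotate (2 * n) x.1, false) else ((finRotate (2 * n)).symm x.1, true),
   fun x => if x.2 then (finRotate (2 * n) x.1, false) else ((finRotate (2 * n)).symm x.1, true),
   fun x => by rcases x with ⟨p, _ | _⟩ <;> simp only [Bool.false_eq_true, if_true, if_false, Equiv.symm_apply_apply, Equiv.apply_symm_apply],
   fun x => by rcases x with ⟨p, _ | _⟩ <;> simp only [Bool.false_eq_true, if_true, if_false, Equiv.symm_apply_apply, Equiv.apply_symm_apply]⟩

/-- the face permutation on darts -/
def facePerm (D : ChordDiagram n) : Equiv.Perm (Fin (2 * n) × Bool) :=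
  (D.arcPerm).trans D.vertexPerm

/-- the number of faces: the number of orbits of the face permutation -/
noncomputable def faceCount (D : ChordDiagram n) : ℕ :=
  Nat.card (MulAction.orbitRel.Quotient (Subgroup.zpowers D.facePerm) (Fin (2 * n) × Bool))

/-- the chord diagram arises from a classical (planar) knot diagram: the carrier
surface has Euler characteristic `V - E + F = n - 2n + faceCount = 2` -/
def PlanarRealizable (D : ChordDiagram n) : Prop := D.faceCount = n + 2

end ChordDiagram


open ChordDiagram

namespace ChordDiagram

/-- natural-number version of `relpos` -/
def rp (m b x : ℕ) : ℕ := (x + m - b) % m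

lemma relpos_eq_rp {n : ℕ} (b x : Fin (2 * n)) : relpos b x = rp (2 * n) b.val x.val := rfl

lemma rp_eq {m b x : ℕ} (hb : b < m) (hx : x < m) :
    rp m b x = if b ≤ x then x - b else x + m - b := by
  unfold rp
  split_ifs with h
  · have hxx : x + m - b = (x - b) + m := by omega
    rw [hxx, Nat.add_mod_right, Nat.mod_eq_of_lt (by omega)]
  · exact Nat.mod_eq_of_lt (by omega)

end ChordDiagram

/-- the odd writhe polynomial is additive under connected sum: if `D`
is the disjoint ordered concatenation of `Da` and `Db` along the circle, then
`f_D = f_{Da} + f_{Db}`. -/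
theorem stmt_14 {na nb : ℕ} (Da : ChordDiagram na) (Db : ChordDiagram nb)
    (D : ChordDiagram (na + nb))
    (hepa : ∀ (j : Fin na) (b : Bool),
      D.ep (Fin.castAdd nb j, b) = Fin.cast (by omega) (Fin.castAdd (2 * nb) (Da.ep (j, b))))
    (hepb : ∀ (j : Fin nb) (b : Bool),
      D.ep (Fin.natAdd na j, b) = Fin.cast (by omega) (Fin.natAdd (2 * na) (Db.ep (j, b))))
    (hsa : ∀ j, D.sign (Fin.castAdd nb j) = Da.sign j)
    (hsb : ∀ j, D.sign (Fin.natAdd na j) = Db.sign j) :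
    D.owp = Da.owp + Db.owp := by
  -- endpoint values
  have hOa : ∀ j : Fin na, (D.overEnd (Fin.castAdd nb j)).val = (Da.overEnd j).val := by
    intro j; unfold ChordDiagram.overEnd; rw [hepa j true]; simp
  have hUa : ∀ j : Fin na, (D.under (Fin.castAdd nb j)).val = (Da.under j).val := by
    intro j; unfold ChordDiagram.under; rw [hepa j false]; simp
  have hOb : ∀ j : Fin nb, (D.overEnd (Fin.natAdd na j)).val = 2 * na + (Db.overEnd j).val := by
    intro j; unfold ChordDiagram.overEnd; rw [hepb j true]; simp
  have hUb : ∀ j : Fin nb, (D.under (Fin.natAdd na j)).val = 2 * na + (Db.under j).val := by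
    intro j; unfold ChordDiagram.under; rw [hepb j false]; simp
  -- StrictlyBetween transfer lemmas
  have SBaa : ∀ (i : Fin na) (x : Fin (2 * (na + nb))) (x' : Fin (2 * na)),
      (x : ℕ) = (x' : ℕ) →
      (D.StrictlyBetween (Fin.castAdd nb i) x ↔ Da.StrictlyBetween i x') := by
    intro i x x' hx
    unfold ChordDiagram.StrictlyBetween
    simp only [relpos_eq_rp]
    rw [hOa i, hUa i, hx]
    have h1 := (Da.overEnd i).isLt; have h2 := (Da.under i).isLt; have h3 := x'.isLt
    rw [rp_eq (by omega) (by omega), rp_eq (by omega) (by omega),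
        rp_eq (by omega) (by omega), rp_eq (by omega) (by omega)]
    constructor <;> (rintro ⟨p, q⟩; revert p q; split_ifs <;> omega)
  have SBab : ∀ (i : Fin na) (x : Fin (2 * (na + nb))), 2 * na ≤ (x : ℕ) →
      (D.StrictlyBetween (Fin.castAdd nb i) x ↔ (Da.under i).val < (Da.overEnd i).val) := by
    intro i x hx
    unfold ChordDiagram.StrictlyBetween
    simp only [relpos_eq_rp]
    rw [hOa i, hUa i]
    have h1 := (Da.overEnd i).isLt; have h2 := (Da.under i).isLt; have h3 := x.isLt
    rw [rp_eq (by omega) (by omega), rp_eq (by omega) (by omega)]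
    constructor
    · rintro ⟨p, q⟩; revert p q; split_ifs <;> omega
    · intro h; revert h; split_ifs <;> omega
  have SBba : ∀ (i : Fin nb) (x : Fin (2 * (na + nb))), (x : ℕ) < 2 * na →
      (D.StrictlyBetween (Fin.natAdd na i) x ↔ (Db.under i).val < (Db.overEnd i).val) := by
    intro i x hx
    unfold ChordDiagram.StrictlyBetween
    simp only [relpos_eq_rp]
    rw [hOb i, hUb i]
    have h1 := (Db.overEnd i).isLt; have h2 := (Db.under i).isLt; have h3 := x.isLt
    rw [rp_eq (by omega) (by omega), rp_eq (by omega) (by omega)]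
    constructor
    · rintro ⟨p, q⟩; revert p q; split_ifs <;> omega
    · intro h; revert h; split_ifs <;> omega
  have SBbb : ∀ (i : Fin nb) (x : Fin (2 * (na + nb))) (x' : Fin (2 * nb)),
      (x : ℕ) = 2 * na + (x' : ℕ) →
      (D.StrictlyBetween (Fin.natAdd na i) x ↔ Db.StrictlyBetween i x') := by
    intro i x x' hx
    unfold ChordDiagram.StrictlyBetween
    simp only [relpos_eq_rp]
    rw [hOb i, hUb i, hx]
    have h1 := (Db.overEnd i).isLt; have h2 := (Db.under i).isLt; have h3 := x'.isLt
    rw [rp_eq (by omega) (by omega), rp_eq (by omega) (by omega),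
        rp_eq (by omega) (by omega), rp_eq (by omega) (by omega)]
    constructor <;> (rintro ⟨p, q⟩; revert p q; split_ifs <;> omega)
  -- Interlinks transfer lemmas
  have Iaa : ∀ i j : Fin na,
      (D.Interlinks (Fin.castAdd nb i) (Fin.castAdd nb j) ↔ Da.Interlinks i j) := by
    intro i j
    unfold ChordDiagram.Interlinks
    rw [SBaa i _ (Da.overEnd j) (hOa j), SBaa i _ (Da.under j) (hUa j)]
    constructor <;> rintro ⟨h1, h2⟩ <;> refine ⟨?_, h2⟩
    · intro h; exact h1 (by rw [h])
    · intro h; apply h1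
      exact Fin.ext (by simpa using congrArg Fin.val h)
  have Ibb : ∀ i j : Fin nb,
      (D.Interlinks (Fin.natAdd na i) (Fin.natAdd na j) ↔ Db.Interlinks i j) := by
    intro i j
    unfold ChordDiagram.Interlinks
    rw [SBbb i _ (Db.overEnd j) (hOb j), SBbb i _ (Db.under j) (hUb j)]
    constructor <;> rintro ⟨h1, h2⟩ <;> refine ⟨?_, h2⟩
    · intro h; exact h1 (by rw [h])
    · intro h; apply h1
      have := congrArg Fin.val h
      simp only [Fin.coe_natAdd] at this
      exact Fin.ext (by omega)
  have Iab : ∀ (i : Fin na) (j : Fin nb),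
      ¬ D.Interlinks (Fin.castAdd nb i) (Fin.natAdd na j) := by
    rintro i j ⟨-, hx⟩
    rw [SBab i _ (by rw [hOb j]; omega), SBab i _ (by rw [hUb j]; omega)] at hx
    rcases hx with ⟨p, q⟩ | ⟨p, q⟩ <;> exact q p
  have Iba : ∀ (i : Fin nb) (j : Fin na),
      ¬ D.Interlinks (Fin.natAdd na i) (Fin.castAdd nb j) := by
    rintro i j ⟨-, hx⟩
    rw [SBba i _ (by rw [hOa j]; exact (Da.overEnd j).isLt.trans_le (by omega)),
        SBba i _ (by rw [hUa j]; exact (Da.under j).isLt.trans_le (by omega))] at hx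
    rcases hx with ⟨p, q⟩ | ⟨p, q⟩ <;> exact q p
  -- interlink counts
  have hcntA : ∀ i : Fin na, D.interlinkCount (Fin.castAdd nb i) = Da.interlinkCount i := by
    intro i
    unfold ChordDiagram.interlinkCount
    rw [Finset.card_filter, Finset.card_filter, Fin.sum_univ_add]
    have h2 : (∑ j : Fin nb,
        if D.Interlinks (Fin.castAdd nb i) (Fin.natAdd na j) then 1 else 0) = 0 :=
      Finset.sum_eq_zero fun j _ => if_neg (Iab i j)
    rw [h2, add_zero]
    exact Finset.sum_congr rfl fun j _ => by rw [if_congr (Iaa i j) rfl rfl]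
  have hcntB : ∀ i : Fin nb, D.interlinkCount (Fin.natAdd na i) = Db.interlinkCount i := by
    intro i
    unfold ChordDiagram.interlinkCount
    rw [Finset.card_filter, Finset.card_filter, Fin.sum_univ_add]
    have h1 : (∑ j : Fin na,
        if D.Interlinks (Fin.natAdd na i) (Fin.castAdd nb j) then 1 else 0) = 0 :=
      Finset.sum_eq_zero fun j _ => if_neg (Iba i j)
    rw [h1, zero_add]
    exact Finset.sum_congr rfl fun j _ => by rw [if_congr (Ibb i j) rfl rfl]
  have oddA : ∀ i : Fin na, (D.OddChord (Fin.castAdd nb i) ↔ Da.OddChord i) := by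
    intro i; unfold ChordDiagram.OddChord; rw [hcntA i]
  have oddB : ∀ i : Fin nb, (D.OddChord (Fin.natAdd na i) ↔ Db.OddChord i) := by
    intro i; unfold ChordDiagram.OddChord; rw [hcntB i]
  -- arc labels
  have harcA : ∀ (a : Fin (2 * (na + nb))) (a' : Fin (2 * na)), (a : ℕ) = (a' : ℕ) →
      D.arcLabel a = Da.arcLabel a' +
        ∑ j : Fin nb, (if (Db.overEnd j).val < (Db.under j).val then Db.sign j else 0) := by
    intro a a' ha
    unfold ChordDiagram.arcLabel
    rw [Finset.sum_filter, Finset.sum_filter, Fin.sum_univ_add]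
    congr 1
    · refine Finset.sum_congr rfl fun j _ => ?_
      have hc : relpos a (D.overEnd (Fin.castAdd nb j)) < relpos a (D.under (Fin.castAdd nb j)) ↔
          relpos a' (Da.overEnd j) < relpos a' (Da.under j) := by
        simp only [relpos_eq_rp]
        rw [hOa j, hUa j, ha]
        have h1 := (Da.overEnd j).isLt; have h2 := (Da.under j).isLt; have h3 := a'.isLt
        rw [rp_eq (by omega) (by omega), rp_eq (by omega) (by omega),
            rp_eq (by omega) (by omega), rp_eq (by omega) (by omega)]
        split_ifs <;> omega
      rw [if_congr hc (hsa j) rfl]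
    · refine Finset.sum_congr rfl fun j _ => ?_
      have hc : relpos a (D.overEnd (Fin.natAdd na j)) < relpos a (D.under (Fin.natAdd na j)) ↔
          (Db.overEnd j).val < (Db.under j).val := by
        simp only [relpos_eq_rp]
        rw [hOb j, hUb j, ha]
        have h1 := (Db.overEnd j).isLt; have h2 := (Db.under j).isLt; have h3 := a'.isLt
        rw [rp_eq (by omega) (by omega), rp_eq (by omega) (by omega)]
        split_ifs <;> omega
      rw [if_congr hc (hsb j) rfl]
  have harcB : ∀ (a : Fin (2 * (na + nb))) (a' : Fin (2 * nb)), (a : ℕ) = 2 * na + (a' : ℕ) →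
      D.arcLabel a = Db.arcLabel a' +
        ∑ j : Fin na, (if (Da.overEnd j).val < (Da.under j).val then Da.sign j else 0) := by
    intro a a' ha
    unfold ChordDiagram.arcLabel
    rw [Finset.sum_filter, Finset.sum_filter, Fin.sum_univ_add, add_comm]
    congr 1
    · refine Finset.sum_congr rfl fun j _ => ?_
      have hc : relpos a (D.overEnd (Fin.natAdd na j)) < relpos a (D.under (Fin.natAdd na j)) ↔
          relpos a' (Db.overEnd j) < relpos a' (Db.under j) := by
        simp only [relpos_eq_rp]
        rw [hOb j, hUb j, ha]
        have h1 := (Db.overEnd j).isLt; have h2 := (Db.under j).isLt; have h3 := a'.isLt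
        rw [rp_eq (by omega) (by omega), rp_eq (by omega) (by omega),
            rp_eq (by omega) (by omega), rp_eq (by omega) (by omega)]
        split_ifs <;> omega
      rw [if_congr hc (hsb j) rfl]
    · refine Finset.sum_congr rfl fun j _ => ?_
      have hc : relpos a (D.overEnd (Fin.castAdd nb j)) < relpos a (D.under (Fin.castAdd nb j)) ↔
          (Da.overEnd j).val < (Da.under j).val := by
        simp only [relpos_eq_rp]
        rw [hOa j, hUa j, ha]
        have h1 := (Da.overEnd j).isLt; have h2 := (Da.under j).isLt; have h3 := a'.isLt
        rw [rp_eq (by omega) (by omega), rp_eq (by omega) (by omega)]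
        split_ifs <;> omega
      rw [if_congr hc (hsa j) rfl]
  -- chord values
  have hvalA : ∀ i : Fin na, D.chordVal (Fin.castAdd nb i) = Da.chordVal i := by
    intro i
    unfold ChordDiagram.chordVal
    rw [hsa i, harcA _ (Da.overEnd i) (hOa i), harcA _ (Da.under i) (hUa i)]
    split_ifs <;> ring
  have hvalB : ∀ i : Fin nb, D.chordVal (Fin.natAdd na i) = Db.chordVal i := by
    intro i
    unfold ChordDiagram.chordVal
    rw [hsb i, harcB _ (Db.overEnd i) (hOb i), harcB _ (Db.under i) (hUb i)]
    split_ifs <;> ring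
  -- final assembly
  unfold ChordDiagram.owp
  rw [Finset.sum_filter, Finset.sum_filter, Finset.sum_filter, Fin.sum_univ_add]
  congr 1
  · exact Finset.sum_congr rfl fun i _ => by
      rw [if_congr (oddA i) (by rw [hsa i, hvalA i]) rfl]
  · exact Finset.sum_congr rfl fun i _ => by
      rw [if_congr (oddB i) (by rw [hsb i, hvalB i]) rfl]
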